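/- arXiv:1406.3722 — 2 statements merged into one kernel-verified Lean document; each statement's English description precedes it below -/
import Mathlib

section
/- Let α, β > 0 be real numbers and a ∈ ℝ. For every real s > 0 with s^α > |a|, the Laplace transform identity ∫₀^∞ e^{-st} t^{β-1} E_{α,β}(a t^α) dt = s^{α-β} / (s^α - a) holds, where E_{α,β}(z) = ∑_{k=0}^∞ z^k / Γ(αk + β). -/
open MeasureTheory Real

/-- The real two-parameter Mittag-Leffler function `E_{α,β}(x) = ∑ x^k / Γ(αk+β)`. -/
noncomputable def mittagLefflerReal (α β : ℝ) (x : ℝ) : ℝ :=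
  ∑' k : ℕ, x ^ k / Real.Gamma (α * k + β)

private lemma aux_integrable {p s : ℝ} (hp : 0 < p) (hs : 0 < s) :
    IntegrableOn (fun t : ℝ => t ^ (p - 1) * Real.exp (-(s * t))) (Set.Ioi 0) := by
  have := integrableOn_rpow_mul_exp_neg_mul_rpow (s := p - 1) (p := 1) (b := s)
    (by linarith) one_pos hs
  simpa [Real.rpow_one, neg_mul] using this

set_option maxHeartbeats 1000000 in
/-- Laplace transform of the Mittag-Leffler kernel:
`∫₀^∞ e^{-st} t^{β-1} E_{α,β}(a t^α) dt = s^{α-β}/(s^α - a)` for `s^α > |a|`. -/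
theorem laplace_mittagLeffler (α β a s : ℝ) (hα : 0 < α) (hβ : 0 < β)
    (hs : 0 < s) (hsa : |a| < s ^ α) :
    ∫ t in Set.Ioi (0 : ℝ), Real.exp (-s * t) * t ^ (β - 1) * mittagLefflerReal α β (a * t ^ α)
      = s ^ (α - β) / (s ^ α - a) := by
  have hsα : (0 : ℝ) < s ^ α := Real.rpow_pos_of_pos hs α
  have hΓ : ∀ k : ℕ, 0 < Real.Gamma (α * k + β) := fun k =>
    Real.Gamma_pos_of_pos (by positivity)
  have hpk : ∀ k : ℕ, (0 : ℝ) < α * k + β := fun k => by positivity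
  set F : ℕ → ℝ → ℝ := fun k t =>
    a ^ k / Real.Gamma (α * k + β) * (t ^ (α * k + β - 1) * Real.exp (-(s * t))) with hF
  -- pointwise expansion of the integrand
  have hpt : ∀ t ∈ Set.Ioi (0 : ℝ),
      Real.exp (-s * t) * t ^ (β - 1) * mittagLefflerReal α β (a * t ^ α)
        = ∑' k : ℕ, F k t := by
    intro t ht
    rw [mittagLefflerReal, ← tsum_mul_left]
    congr 1
    funext k
    have h1 : (a * t ^ α) ^ k = a ^ k * t ^ (α * (k : ℝ)) := by
      rw [mul_pow, Real.rpow_mul (le_of_lt ht), Real.rpow_natCast]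
    have h2 : t ^ (α * (k : ℝ) + β - 1) = t ^ (α * (k : ℝ)) * t ^ (β - 1) := by
      rw [← Real.rpow_add ht]; ring_nf
    simp only [hF, h1, h2, neg_mul]
    ring
  -- integrability of each term
  have hInt : ∀ k : ℕ, IntegrableOn (F k) (Set.Ioi 0) := fun k =>
    ((aux_integrable (hpk k) hs).const_mul _)
  -- value of each integral
  have hval : ∀ (c : ℝ) (k : ℕ),
      ∫ t in Set.Ioi (0 : ℝ),
        c ^ k / Real.Gamma (α * k + β) * (t ^ (α * k + β - 1) * Real.exp (-(s * t)))
        = c ^ k * (1 / s) ^ (α * k + β) := by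
    intro c k
    rw [MeasureTheory.integral_const_mul, integral_rpow_mul_exp_neg_mul_Ioi (hpk k) hs,
      mul_comm ((1 / s) ^ (α * k + β)) _, ← mul_assoc,
      div_mul_cancel₀ _ (hΓ k).ne']
  -- norm integrals
  have hnormval : ∀ k : ℕ,
      ∫ t in Set.Ioi (0 : ℝ), ‖F k t‖ = |a| ^ k * (1 / s) ^ (α * k + β) := by
    intro k
    rw [← hval |a| k]
    apply setIntegral_congr_fun measurableSet_Ioi
    intro t ht
    have ht' : (0 : ℝ) < t := ht
    have h1 : (0 : ℝ) ≤ t ^ (α * k + β - 1) * Real.exp (-(s * t)) := by positivity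
    simp only [hF, Real.norm_eq_abs, abs_mul, abs_div, abs_pow,
      abs_of_pos (hΓ k), abs_of_nonneg h1]
  -- geometric rewriting
  have hgeom : ∀ (c : ℝ) (k : ℕ),
      c ^ k * (1 / s) ^ (α * k + β) = (1 / s) ^ β * (c * (s ^ α)⁻¹) ^ k := by
    intro c k
    have h1s : (0 : ℝ) < 1 / s := by positivity
    rw [Real.rpow_add h1s, Real.rpow_mul (le_of_lt h1s), Real.rpow_natCast,
      one_div, Real.inv_rpow hs.le, mul_pow]
    ring
  have hq : ‖a * (s ^ α)⁻¹‖ < 1 := by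
    rw [Real.norm_eq_abs, abs_mul, abs_of_pos (inv_pos.mpr hsα)]
    rw [← div_lt_one hsα] at hsa
    simpa [div_eq_mul_inv] using hsa
  -- summability of norm integrals
  have hq' : ‖|a| * (s ^ α)⁻¹‖ < 1 := by
    rwa [Real.norm_eq_abs, abs_mul, abs_abs, abs_of_pos (inv_pos.mpr hsα),
      ← abs_of_pos (inv_pos.mpr hsα), ← abs_mul, ← Real.norm_eq_abs]
  have hsum : Summable fun k : ℕ => ∫ t in Set.Ioi (0 : ℝ), ‖F k t‖ := by
    apply Summable.congr (f := fun k : ℕ => (1 / s) ^ β * (|a| * (s ^ α)⁻¹) ^ k)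
    · exact (summable_geometric_of_norm_lt_one hq').mul_left _
    · intro k
      rw [hnormval k, hgeom |a| k]
  -- interchange sum and integral
  have hswap := MeasureTheory.integral_tsum_of_summable_integral_norm
    (μ := volume.restrict (Set.Ioi (0 : ℝ))) (F := F) hInt hsum
  rw [setIntegral_congr_fun measurableSet_Ioi hpt, ← hswap]
  -- compute the sum
  have : ∀ k : ℕ, ∫ t in Set.Ioi (0 : ℝ), F k t
      = (1 / s) ^ β * (a * (s ^ α)⁻¹) ^ k := fun k => by
    rw [hF]; rw [hval a k, hgeom a k]
  simp only [this]
  rw [tsum_mul_left, tsum_geometric_of_norm_lt_one hq]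
  -- final algebra
  have hden : (0 : ℝ) < s ^ α - a :=
    sub_pos.mpr ((le_abs_self a).trans_lt hsa)
  have hsβ : (0 : ℝ) < s ^ β := Real.rpow_pos_of_pos hs β
  rw [Real.rpow_sub hs, one_div, Real.inv_rpow hs.le]
  have h1 : 1 - a * (s ^ α)⁻¹ = (s ^ α - a) / s ^ α := by
    field_simp
  rw [h1]
  field_simp
end

section
/- Let α > 0, β > 0 be real and a ∈ ℝ. The function t ↦ t^{β-1} E_{α,β}(a t^α) is interchangeable with term-by-term Laplace transformation: for s > 0 with s^α > |a|, ∫₀^∞ e^{-st} t^{β-1} ∑_{k=0}^∞ (a t^α)^k/Γ(αk+β) dt = ∑_{k=0}^∞ a^k ∫₀^∞ e^{-st} t^{αk+β-1}/Γ(αk+β) dt = ∑_{k=0}^∞ a^k s^{-(αk+β)} = s^{α-β}/(s^α - a). -/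
open MeasureTheory Real

lemma ML_integrable {γ s : ℝ} (hγ : 0 < γ) (hs : 0 < s) :
    IntegrableOn (fun t : ℝ => Real.exp (-s * t) * t ^ (γ - 1)) (Set.Ioi 0) := by
  have := integrableOn_rpow_mul_exp_neg_mul_rpow (p := 1) (s := γ - 1) (b := s)
    (by linarith) one_pos hs
  refine this.congr_fun (fun t ht => ?_) measurableSet_Ioi
  beta_reduce
  rw [Real.rpow_one, mul_comm]

lemma ML_integral {γ s : ℝ} (hγ : 0 < γ) (hs : 0 < s) :
    ∫ t in Set.Ioi (0 : ℝ), Real.exp (-s * t) * t ^ (γ - 1) = Real.Gamma γ * s ^ (-γ) := by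
  have h := integral_rpow_mul_exp_neg_mul_Ioi hγ hs
  rw [show (∫ t in Set.Ioi (0:ℝ), Real.exp (-s * t) * t ^ (γ - 1))
      = ∫ t in Set.Ioi (0:ℝ), t ^ (γ - 1) * Real.exp (-(s * t)) by
    refine setIntegral_congr_fun measurableSet_Ioi (fun t ht => ?_)
    rw [neg_mul, mul_comm], h, one_div, ← Real.rpow_neg_one,
    ← Real.rpow_mul hs.le, neg_one_mul, mul_comm]

lemma ML_integral_div {γ s : ℝ} (hγ : 0 < γ) (hs : 0 < s) :
    ∫ t in Set.Ioi (0 : ℝ), Real.exp (-s * t) * t ^ (γ - 1) / Real.Gamma γ = s ^ (-γ) := by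
  rw [integral_div, ML_integral hγ hs,
    mul_div_cancel_left₀ _ (Real.Gamma_pos_of_pos hγ).ne']

/-- Term-by-term Laplace transformation of the Mittag-Leffler series: for `s^α > |a|`,
`∫₀^∞ e^{-st} t^{β-1} ∑ₖ (a t^α)^k/Γ(αk+β) dt = ∑ₖ aᵏ ∫₀^∞ e^{-st} t^{αk+β-1}/Γ(αk+β) dt
 = ∑ₖ aᵏ s^{-(αk+β)} = s^{α-β}/(s^α - a)`. -/
theorem laplace_mittagLeffler_term_by_term (α β a s : ℝ) (hα : 0 < α) (hβ : 0 < β)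
    (hs : 0 < s) (hsa : |a| < s ^ α) :
    (∫ t in Set.Ioi (0 : ℝ),
        Real.exp (-s * t) * t ^ (β - 1) * ∑' k : ℕ, (a * t ^ α) ^ k / Real.Gamma (α * k + β))
      = (∑' k : ℕ, a ^ k *
          ∫ t in Set.Ioi (0 : ℝ), Real.exp (-s * t) * t ^ (α * k + β - 1) / Real.Gamma (α * k + β))
    ∧ (∑' k : ℕ, a ^ k *
          ∫ t in Set.Ioi (0 : ℝ), Real.exp (-s * t) * t ^ (α * k + β - 1) / Real.Gamma (α * k + β))
      = (∑' k : ℕ, a ^ k * s ^ (-(α * k + β)))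
    ∧ (∑' k : ℕ, a ^ k * s ^ (-(α * k + β))) = s ^ (α - β) / (s ^ α - a) := by
  have hsα : (0:ℝ) < s ^ α := Real.rpow_pos_of_pos hs α
  have hγ : ∀ k : ℕ, (0:ℝ) < α * k + β := fun k => by positivity
  -- the k-th term as a function of t
  set F : ℕ → ℝ → ℝ := fun k t =>
    a ^ k * (Real.exp (-s * t) * t ^ (α * k + β - 1) / Real.Gamma (α * k + β)) with hF
  -- pointwise identity on Ioi 0
  have hpt : ∀ t ∈ Set.Ioi (0:ℝ), ∀ k : ℕ,
      Real.exp (-s * t) * t ^ (β - 1) * ((a * t ^ α) ^ k / Real.Gamma (α * k + β)) = F k t := by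
    intro t ht k
    have ht' : (0:ℝ) < t := ht
    have h1 : (a * t ^ α) ^ k = a ^ k * t ^ (α * k) := by
      rw [mul_pow, ← Real.rpow_natCast (t ^ α) k, ← Real.rpow_mul ht'.le]
    have h2 : t ^ (α * k + β - 1) = t ^ (β - 1) * t ^ (α * (k:ℝ)) := by
      rw [← Real.rpow_add ht']; congr 1; ring
    simp only [hF, h1, h2]
    ring
  -- integrability of each term
  have hint : ∀ k : ℕ, IntegrableOn (F k) (Set.Ioi 0) := by
    intro k
    exact (((ML_integrable (hγ k) hs).div_const _).const_mul _)
  -- norm integrals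
  have hnorm : ∀ k : ℕ, (∫ t in Set.Ioi (0:ℝ), ‖F k t‖)
      = |a| ^ k * s ^ (-(α * k + β)) := by
    intro k
    have : (∫ t in Set.Ioi (0:ℝ), ‖F k t‖)
        = ∫ t in Set.Ioi (0:ℝ),
            |a| ^ k * (Real.exp (-s * t) * t ^ (α * k + β - 1) / Real.Gamma (α * k + β)) := by
      refine setIntegral_congr_fun measurableSet_Ioi (fun t ht => ?_)
      have ht' : (0:ℝ) < t := ht
      have hnn : (0:ℝ) ≤ Real.exp (-s * t) * t ^ (α * k + β - 1) / Real.Gamma (α * k + β) := by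
        have := (Real.Gamma_pos_of_pos (hγ k)).le
        positivity
      rw [hF, Real.norm_eq_abs, abs_mul, abs_pow, abs_of_nonneg hnn]
    rw [this, integral_const_mul, ML_integral_div (hγ k) hs]
  -- geometric rewriting of the norms
  have hratio : |a| * s ^ (-α) < 1 := by
    rw [Real.rpow_neg hs.le, ← div_eq_mul_inv, div_lt_one hsα]
    exact hsa
  have hpow : ∀ (b : ℝ) (k : ℕ), b ^ k * s ^ (-(α * k + β)) = (b * s ^ (-α)) ^ k * s ^ (-β) := by
    intro b k
    have h3 : (s ^ (-α) : ℝ) ^ k = s ^ (-α * (k:ℝ)) := by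
      rw [← Real.rpow_natCast (s ^ (-α)) k, ← Real.rpow_mul hs.le]
    have h4 : -(α * (k:ℝ) + β) = -α * (k:ℝ) + -β := by ring
    rw [h4, Real.rpow_add hs, mul_pow, h3]
    ring
  have hsum_norm : Summable fun k : ℕ => |a| ^ k * s ^ (-(α * k + β)) := by
    have : Summable fun k : ℕ => (|a| * s ^ (-α)) ^ k * s ^ (-β) :=
      (summable_geometric_of_lt_one (by positivity) hratio).mul_right _
    exact this.congr fun k => (hpow _ k).symm
  have hsum : Summable fun k : ℕ => ∫ t in Set.Ioi (0:ℝ), ‖F k t‖ :=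
    hsum_norm.congr fun k => (hnorm k).symm
  -- Part 1
  have part1 : (∫ t in Set.Ioi (0 : ℝ),
        Real.exp (-s * t) * t ^ (β - 1) * ∑' k : ℕ, (a * t ^ α) ^ k / Real.Gamma (α * k + β))
      = ∑' k : ℕ, ∫ t in Set.Ioi (0:ℝ), F k t := by
    rw [integral_tsum_of_summable_integral_norm hint hsum]
    refine setIntegral_congr_fun measurableSet_Ioi (fun t ht => ?_)
    rw [← tsum_mul_left]
    exact tsum_congr fun k => hpt t ht k
  have hFk : ∀ k : ℕ, (∫ t in Set.Ioi (0:ℝ), F k t)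
      = a ^ k * ∫ t in Set.Ioi (0 : ℝ),
          Real.exp (-s * t) * t ^ (α * k + β - 1) / Real.Gamma (α * k + β) := fun k =>
    integral_const_mul _ _
  have part2 : ∀ k : ℕ, (a ^ k * ∫ t in Set.Ioi (0 : ℝ),
        Real.exp (-s * t) * t ^ (α * k + β - 1) / Real.Gamma (α * k + β))
      = a ^ k * s ^ (-(α * k + β)) := fun k => by
    rw [ML_integral_div (hγ k) hs]
  refine ⟨?_, ?_, ?_⟩
  · rw [part1]; exact tsum_congr hFk
  · exact tsum_congr part2
  · have hgeo : ∑' k : ℕ, (a * s ^ (-α)) ^ k = (1 - a * s ^ (-α))⁻¹ := by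
      refine tsum_geometric_of_norm_lt_one ?_
      rw [Real.norm_eq_abs, abs_mul, abs_of_nonneg (Real.rpow_nonneg hs.le _)]
      exact hratio
    calc (∑' k : ℕ, a ^ k * s ^ (-(α * k + β)))
        = ∑' k : ℕ, (a * s ^ (-α)) ^ k * s ^ (-β) := tsum_congr fun k => hpow a k
      _ = (1 - a * s ^ (-α))⁻¹ * s ^ (-β) := by rw [tsum_mul_right, hgeo]
      _ = s ^ (α - β) / (s ^ α - a) := by
          have hne : s ^ α - a ≠ 0 := by
            have : a < s ^ α := lt_of_le_of_lt (le_abs_self a) hsa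
            linarith
          rw [Real.rpow_sub hs, Real.rpow_neg hs.le α, Real.rpow_neg hs.le β]
          have h1 : (1 - a * (s ^ α)⁻¹) = (s ^ α - a) / s ^ α := by
            field_simp
          rw [h1, inv_div, div_mul_eq_mul_div, ← div_eq_mul_inv]
end
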